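/- Let âᵢ ∈ K and b̂ᵢ ∈ K be arbitrary with Σᵢ b̂ᵢ = 1 (b̂ᵢ chosen freely), and suppose the âᵢ solve the system Σ_{i=0}^p âᵢ p̂ᵢᵏ = c_k + Σ_{i=0}^q b̂ᵢ Σ_{j=0}^{k−1} c_j ẑᵢ^{k−j} for k = 0,...,p. Then the expansion of R(t) = (Σᵢ âᵢ/(1 − p̂ᵢt))/(Σᵢ b̂ᵢ/(1 − ẑᵢt)) agrees with f = Σ cₖtᵏ through order p (barycentric Padé-type approximant). -/

import Mathlib

open Finset

lemma geom_inv' (K : Type*) [Field K] (a : K) :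
    (1 - PowerSeries.C (R := K) a * PowerSeries.X)⁻¹ = PowerSeries.mk fun n => a ^ n := by
  rw [PowerSeries.inv_eq_iff_mul_eq_one]
  · ext n
    rw [mul_sub, mul_one, map_sub]
    cases n with
    | zero => simp
    | succ m =>
      rw [show PowerSeries.mk (fun n => a ^ n) * (PowerSeries.C (R := K) a * PowerSeries.X)
            = (PowerSeries.mk (fun n => a ^ n) * PowerSeries.C (R := K) a) * PowerSeries.X by ring,
        PowerSeries.coeff_succ_mul_X]
      simp [pow_succ, mul_comm]
  · simp

/-- Barycentric Padé-type approximant: with `b̂ᵢ` arbitrary subject to `∑ b̂ᵢ = 1`, if the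
`âᵢ` solve `∑ᵢ âᵢ p̂ᵢᵏ = c_k + ∑ᵢ b̂ᵢ ∑_{j<k} c_j ẑᵢ^{k−j}` for `k = 0,…,p`, then the
expansion of `R = (∑ âᵢ/(1 − p̂ᵢ t))/(∑ b̂ᵢ/(1 − ẑᵢ t))` agrees with `f = ∑ c_k t^k`
through order `p`. -/
theorem barycentric_pade_type_accuracy
    (K : Type*) [Field K] (p q : ℕ) (c ah bh ph zh : ℕ → K)
    (hphd : ∀ i ≤ p, ∀ j ≤ p, i ≠ j → ph i ≠ ph j)
    (hzhd : ∀ i ≤ q, ∀ j ≤ q, i ≠ j → zh i ≠ zh j)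
    (hnorm : ∑ i ∈ Finset.range (q + 1), bh i = 1)
    (hsys : ∀ k ≤ p,
      ∑ i ∈ Finset.range (p + 1), ah i * ph i ^ k =
        c k + ∑ i ∈ Finset.range (q + 1),
          bh i * ∑ j ∈ Finset.range k, c j * zh i ^ (k - j)) :
    ∀ k ≤ p,
      PowerSeries.coeff (R := K) k
        ((∑ i ∈ Finset.range (p + 1),
            PowerSeries.C (R := K) (ah i) * (1 - PowerSeries.C (R := K) (ph i) * PowerSeries.X)⁻¹) *
          (∑ i ∈ Finset.range (q + 1),
            PowerSeries.C (R := K) (bh i) * (1 - PowerSeries.C (R := K) (zh i) * PowerSeries.X)⁻¹)⁻¹) = c k := by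
  set N := ∑ i ∈ Finset.range (p + 1),
      PowerSeries.C (R := K) (ah i) * (1 - PowerSeries.C (R := K) (ph i) * PowerSeries.X)⁻¹ with hN
  set D := ∑ i ∈ Finset.range (q + 1),
      PowerSeries.C (R := K) (bh i) * (1 - PowerSeries.C (R := K) (zh i) * PowerSeries.X)⁻¹ with hD
  set F := PowerSeries.mk c with hF
  have hDc : PowerSeries.constantCoeff (R := K) D ≠ 0 := by
    simp only [hD, map_sum, map_mul, geom_inv', PowerSeries.constantCoeff_C]
    simp [hnorm]
  -- coefficients of N
  have hNcoeff : ∀ k, PowerSeries.coeff (R := K) k N =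
      ∑ i ∈ Finset.range (p + 1), ah i * ph i ^ k := by
    intro k
    simp [hN, geom_inv', PowerSeries.coeff_C_mul]
  -- coefficients of F * D
  have hFD : ∀ k, PowerSeries.coeff (R := K) k (F * D) =
      c k + ∑ i ∈ Finset.range (q + 1),
        bh i * ∑ j ∈ Finset.range k, c j * zh i ^ (k - j) := by
    intro k
    rw [Finset.mul_sum]
    simp only [map_sum]
    have : ∀ i, PowerSeries.coeff (R := K) k
        (F * (PowerSeries.C (R := K) (bh i) * (1 - PowerSeries.C (R := K) (zh i) * PowerSeries.X)⁻¹)) =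
        bh i * (c k + ∑ j ∈ Finset.range k, c j * zh i ^ (k - j)) := by
      intro i
      rw [geom_inv', show F * (PowerSeries.C (R := K) (bh i) * PowerSeries.mk fun n => zh i ^ n)
          = PowerSeries.C (R := K) (bh i) * (F * PowerSeries.mk fun n => zh i ^ n) by ring,
        PowerSeries.coeff_C_mul, PowerSeries.coeff_mul]
      congr 1
      rw [Finset.Nat.sum_antidiagonal_eq_sum_range_succ_mk, Finset.sum_range_succ]
      simp only [hF, PowerSeries.coeff_mk]
      rw [add_comm]
      simp
    rw [Finset.sum_congr rfl fun i _ => this i, Finset.sum_congr rfl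
      (fun i _ => mul_add (bh i) (c k) _), Finset.sum_add_distrib, ← Finset.sum_mul, hnorm,
      one_mul]
  -- key: N and F*D agree through order p
  have hkey : ∀ k ≤ p, PowerSeries.coeff (R := K) k (N - F * D) = 0 := by
    intro k hk
    rw [map_sub, hNcoeff, hFD, hsys k hk, sub_self]
  intro k hk
  have hsplit : N * D⁻¹ = F + (N - F * D) * D⁻¹ := by
    rw [sub_mul, mul_assoc, PowerSeries.mul_inv_cancel _ hDc, mul_one]
    ring
  rw [hsplit, map_add]
  have : PowerSeries.coeff (R := K) k ((N - F * D) * D⁻¹) = 0 := by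
    rw [PowerSeries.coeff_mul]
    refine Finset.sum_eq_zero fun x hx => ?_
    rw [hkey x.1 (le_trans (Finset.HasAntidiagonal.antidiagonal.fst_le hx) hk), zero_mul]
  rw [this, add_zero]
  simp [hF]
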